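/- King Latin squares of odd order do not exist: for odd n there is no n×n Latin square in which every cell has another cell a king's move apart containing the same value. -/
import Mathlib


/-- An `n × n` Latin square with entries in `{1, …, n}`. -/
def latin (n : ℕ) (M : Fin n → Fin n → ℕ) : Prop :=
  (∀ i j, M i j ∈ Finset.Icc 1 n) ∧
  (∀ i, Function.Injective fun j => M i j) ∧
  (∀ j, Function.Injective fun i => M i j)

/-- Two cells are orthogonally adjacent. -/
def orthAdj (n : ℕ) (p q : Fin n × Fin n) : Prop :=
  (p.1 = q.1 ∧ (p.2.val + 1 = q.2.val ∨ q.2.val + 1 = p.2.val)) ∨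
  (p.2 = q.2 ∧ (p.1.val + 1 = q.1.val ∨ q.1.val + 1 = p.1.val))

/-- Two cells are a king's move apart (orthogonally or diagonally adjacent). -/
def kingAdj (n : ℕ) (p q : Fin n × Fin n) : Prop :=
  p ≠ q ∧ ((p.1.val : ℤ) - q.1.val).natAbs ≤ 1 ∧ ((p.2.val : ℤ) - q.2.val).natAbs ≤ 1

/-- Two cells are a knight's move apart. -/
def knightAdj (n : ℕ) (p q : Fin n × Fin n) : Prop :=
  (((p.1.val : ℤ) - q.1.val).natAbs = 1 ∧ ((p.2.val : ℤ) - q.2.val).natAbs = 2) ∨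
  (((p.1.val : ℤ) - q.1.val).natAbs = 2 ∧ ((p.2.val : ℤ) - q.2.val).natAbs = 1)

/-- Two cells are a bishop's move apart: on a common diagonal, at nonzero distance. -/
def bishopMove (n : ℕ) (p q : Fin n × Fin n) : Prop :=
  ((p.1.val : ℤ) - q.1.val).natAbs = ((p.2.val : ℤ) - q.2.val).natAbs ∧ p.1 ≠ q.1

/-- Two cells are orthogonally adjacent on the torus (wrapping around). -/
def torAdj (n : ℕ) (p q : Fin n × Fin n) : Prop :=
  p ≠ q ∧
    ((p.1 = q.1 ∧ ((p.2.val + 1) % n = q.2.val ∨ (q.2.val + 1) % n = p.2.val)) ∨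
     (p.2 = q.2 ∧ ((p.1.val + 1) % n = q.1.val ∨ (q.1.val + 1) % n = p.1.val)))

/-- Two values differ by exactly 1. -/
def diffOne (a b : ℕ) : Prop := ((a : ℤ) - (b : ℤ)).natAbs = 1

/-- King Latin squares of odd order do not exist. -/
theorem stmt18 (n : ℕ) (hodd : Odd n) :
    ¬ ∃ M : Fin n → Fin n → ℕ, latin n M ∧
      ∀ p : Fin n × Fin n, ∃ q : Fin n × Fin n,
        kingAdj n p q ∧ M q.1 q.2 = M p.1 p.2 := by
  rintro ⟨M, ⟨-, hrow, hcol⟩, hking⟩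
  have hn : 0 < n := hodd.pos
  choose q hadj hMq using fun j : Fin n => hking (⟨0, hn⟩, j)
  -- the partner of (0,j) is not in column j
  have hc : ∀ j, (q j).2 ≠ j := by
    intro j h
    have e := hMq j
    rw [h] at e
    have h1 : (q j).1 = (⟨0, hn⟩ : Fin n) := hcol j e
    exact (hadj j).1 (by rw [Prod.ext_iff]; exact ⟨h1.symm, h.symm⟩)
  -- the partner is not in row 0
  have hr : ∀ j, (q j).1 ≠ (⟨0, hn⟩ : Fin n) := by
    intro j h
    have e := hMq j
    rw [h] at e
    have h2 : (q j).2 = j := hrow _ e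
    exact (hadj j).1 (by rw [Prod.ext_iff]; exact ⟨h.symm, h2.symm⟩)
  -- so the partner is in row 1
  have hrow1 : ∀ j, (q j).1.val = 1 := by
    intro j
    have h1 := (hadj j).2.1
    have h2 : (q j).1.val ≠ 0 := by
      intro h
      exact hr j (Fin.ext h)
    simp only [Fin.val_mk] at h1
    omega
  set f : Fin n → Fin n := fun j => (q j).2 with hf
  have hfinj : Function.Injective f := by
    intro j1 j2 h
    have e1 : M (q j1).1 (f j1) = M (⟨0, hn⟩ : Fin n) j1 := hMq j1
    have e2 : M (q j2).1 (f j2) = M (⟨0, hn⟩ : Fin n) j2 := hMq j2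
    have hq12 : (q j1).1 = (q j2).1 := Fin.ext (by rw [hrow1, hrow1])
    apply hrow (⟨0, hn⟩ : Fin n)
    show M _ j1 = M _ j2
    rw [← e1, ← e2, h, hq12]
  have hbij : Function.Bijective f := Finite.injective_iff_bijective.mp hfinj
  have hstep : ∀ j : Fin n, (((f j).val : ℤ) - j.val = 1) ∨ (((f j).val : ℤ) - j.val = -1) := by
    intro j
    have h1 := (hadj j).2.2
    have h2 : (f j).val ≠ j.val := fun h => hc j (Fin.ext h)
    simp only [hf] at h2 ⊢
    simp only [Fin.val_mk] at h1
    omega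
  have hsum : ∑ j : Fin n, ((f j).val : ℤ) = ∑ j : Fin n, (j.val : ℤ) :=
    hbij.sum_comp (fun x : Fin n => (x.val : ℤ))
  have h0 : (∑ j : Fin n, (((f j).val : ℤ) - j.val)) = 0 := by
    rw [Finset.sum_sub_distrib, hsum, sub_self]
  have h2 : ((∑ j : Fin n, (((f j).val : ℤ) - j.val) : ℤ) : ZMod 2) = 0 := by
    rw [h0]; simp
  rw [Int.cast_sum] at h2
  have hterm : ∀ j : Fin n, ((((f j).val : ℤ) - j.val : ℤ) : ZMod 2) = 1 := by
    intro j
    rcases hstep j with h | h <;> rw [h] <;> decide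
  rw [Finset.sum_congr rfl (fun j _ => hterm j)] at h2
  simp only [Finset.sum_const, Finset.card_univ, Fintype.card_fin, nsmul_eq_mul, mul_one] at h2
  have : (2 : ℕ) ∣ n := (ZMod.natCast_eq_zero_iff n 2).mp h2
  exact (Nat.not_even_iff_odd.mpr hodd) (even_iff_two_dvd.mpr this)
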